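/- (Thermal Theorem.) Let G=(V,E) be a finite connected undirected simple graph, let r > 1 be real, and let f be the fixation function for the generalized Moran process on G with fitness r. Then for every vertex v ∈ V, f({v}) ≥ (r−1)/(r + deg(v)/δ(G)), where δ(G) denotes the minimum degree of G. -/

import Mathlib

private lemma walk_boundary {V : Type*} [Fintype V] [DecidableEq V] {G : SimpleGraph V}
    {S : Finset V} : ∀ {a b : V}, G.Walk a b → a ∈ S → b ∉ S →
    ∃ x ∈ S, ∃ y ∈ Sᶜ, G.Adj x y
  | _, _, SimpleGraph.Walk.nil, ha, hb => absurd ha hb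
  | _, _, @SimpleGraph.Walk.cons _ _ _ c _ h p, ha, hb => by
    by_cases hc : c ∈ S
    · exact walk_boundary p hc hb
    · exact ⟨_, ha, _, Finset.mem_compl.2 hc, h⟩

private lemma exists_boundary_edge {V : Type*} [Fintype V] [DecidableEq V] {G : SimpleGraph V}
    (hconn : G.Connected) {S : Finset V} (hS : S ≠ ∅) (hS' : S ≠ Finset.univ) :
    ∃ x ∈ S, ∃ y ∈ Sᶜ, G.Adj x y := by
  obtain ⟨a, ha⟩ := Finset.nonempty_iff_ne_empty.2 hS
  obtain ⟨b, hb⟩ : ∃ b, b ∉ S := by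
    by_contra h; push_neg at h; exact hS' (Finset.eq_univ_iff_forall.2 h)
  obtain ⟨w⟩ := hconn.preconnected a b
  exact walk_boundary w ha hb

private lemma per_edge {r da db s P : ℝ} (hda : 0 < da) (hdb : 0 < db) (hs : 0 < s)
    (hP : 0 < P) (hkey : db + s ≤ r * db) :
    (r / da + 1 / db) * (1 - P) ≤
      r / da * (1 - db / (db + s) * P) + 1 / db * (1 - (da + s) / da * P) := by
  have h1 : 0 < db + s := by linarith
  rw [← sub_nonneg]
  have heq : r / da * (1 - db / (db + s) * P) + 1 / db * (1 - (da + s) / da * P)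
      - (r / da + 1 / db) * (1 - P)
      = P * s * (r * db - (db + s)) / (da * db * (db + s)) := by
    field_simp
    ring
  rw [heq]
  have : 0 ≤ r * db - (db + s) := by linarith
  positivity


/-- `f` is a fixation function for the generalized Moran process on `G` with fitness `r`. -/
def IsFixation {V : Type*} [Fintype V] [DecidableEq V] (G : SimpleGraph V)
    [DecidableRel G.Adj] (r : ℝ) (f : Finset V → ℝ) : Prop :=
  (∀ S : Finset V, 0 ≤ f S ∧ f S ≤ 1) ∧ f ∅ = 0 ∧ f Finset.univ = 1 ∧
  ∀ S : Finset V, S ≠ ∅ → S ≠ Finset.univ →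
    f S * ∑ a ∈ S, ∑ b ∈ Sᶜ,
      (if G.Adj a b then r / (G.degree a : ℝ) + 1 / (G.degree b : ℝ) else 0)
    = ∑ a ∈ S, ∑ b ∈ Sᶜ,
      (if G.Adj a b then r / (G.degree a : ℝ) * f (insert b S)
        + 1 / (G.degree b : ℝ) * f (S.erase a) else 0)

/-- **Thermal Theorem**: for any connected undirected graph `G` and any `r > 1`, the
fixation probability of any vertex `v` is at least `(r-1)/(r + deg v / δ(G))`. -/
theorem thermal_theorem {V : Type*} [Fintype V] [DecidableEq V] [Nonempty V]
    (G : SimpleGraph V) [DecidableRel G.Adj] (hconn : G.Connected)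
    (r : ℝ) (hr : 1 < r) (f : Finset V → ℝ) (hf : IsFixation G r f) (v : V) :
    f {v} ≥ (r - 1) / (r + (G.degree v : ℝ) / (G.minDegree : ℝ)) := by
  classical
  obtain ⟨hf01, hf0, hf1, hfeq⟩ := hf
  rcases subsingleton_or_nontrivial V with hss | hnt
  · have huniv : ({v} : Finset V) = Finset.univ := by
      apply Finset.eq_univ_iff_forall.2
      intro w
      simp [Subsingleton.elim w v]
    have hfv : f {v} = 1 := by rw [huniv]; exact hf1
    rw [hfv, ge_iff_le]
    have hd : (0:ℝ) ≤ (G.degree v : ℝ) / (G.minDegree : ℝ) := by positivity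
    rw [div_le_one (by linarith)]
    linarith
  · have hadjex : ∀ u : V, ∃ w, G.Adj u w := by
      intro u
      have h1 : ({u} : Finset V) ≠ ∅ := by simp
      have h2 : ({u} : Finset V) ≠ Finset.univ := by
        obtain ⟨w, hw⟩ := exists_ne u
        intro h
        have : w ∈ ({u} : Finset V) := h ▸ Finset.mem_univ w
        exact hw (Finset.mem_singleton.1 this)
      obtain ⟨x, hx, y, hy, hxy⟩ := exists_boundary_edge hconn h1 h2
      exact ⟨y, (Finset.mem_singleton.1 hx) ▸ hxy⟩
    have hdeg : ∀ u : V, 0 < G.degree u := fun u =>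
      (G.degree_pos_iff_exists_adj u).2 (hadjex u)
    have hδnat : 0 < G.minDegree := by
      obtain ⟨u, hu⟩ := G.exists_minimal_degree_vertex
      rw [hu]; exact hdeg u
    have hδ : 0 < (G.minDegree : ℝ) := by exact_mod_cast hδnat
    set δ : ℝ := (G.minDegree : ℝ) with hδdef
    have hdegR : ∀ u : V, 0 < ((G.degree u : ℕ) : ℝ) := fun u => by
      exact_mod_cast hdeg u
    have hδle : ∀ u : V, δ ≤ ((G.degree u : ℕ) : ℝ) := fun u => by
      rw [hδdef]; exact_mod_cast G.minDegree_le_degree u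
    set s : ℝ := (r - 1) * δ with hsdef
    have hs : 0 < s := mul_pos (by linarith) hδ
    set lam : V → ℝ := fun u => (G.degree u : ℝ) / ((G.degree u : ℝ) + s) with hlam
    have hlampos : ∀ u, 0 < lam u := fun u => div_pos (hdegR u) (by linarith [hdegR u])
    set h : Finset V → ℝ := fun S => 1 - ∏ u ∈ S, lam u with hh
    have hProdpos : ∀ S : Finset V, 0 < ∏ u ∈ S, lam u :=
      fun S => Finset.prod_pos (fun u _ => hlampos u)
    have hedge : ∀ (S : Finset V), ∀ a ∈ S, ∀ b ∈ Sᶜ, G.Adj a b →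
        (r / (G.degree a : ℝ) + 1 / (G.degree b : ℝ)) * h S ≤
          r / (G.degree a : ℝ) * h (insert b S)
          + 1 / (G.degree b : ℝ) * h (S.erase a) := by
      intro S a ha b hb hab
      have hbS : b ∉ S := Finset.mem_compl.1 hb
      have hP : 0 < ∏ u ∈ S, lam u := hProdpos S
      have hins : h (insert b S)
          = 1 - (G.degree b : ℝ)/((G.degree b : ℝ)+s) * ∏ u ∈ S, lam u := by
        simp only [hh]
        rw [Finset.prod_insert hbS]
      have h2 : lam a * ∏ u ∈ S.erase a, lam u = ∏ u ∈ S, lam u :=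
        Finset.mul_prod_erase S lam ha
      have hera : h (S.erase a)
          = 1 - ((G.degree a:ℝ)+s)/(G.degree a:ℝ) * ∏ u ∈ S, lam u := by
        simp only [hh]
        rw [← h2]
        have hla : lam a = (G.degree a : ℝ)/((G.degree a:ℝ)+s) := rfl
        rw [hla]
        have h3 : (G.degree a : ℝ) ≠ 0 := ne_of_gt (hdegR a)
        have h4 : (G.degree a : ℝ) + s ≠ 0 := by positivity
        congr 1
        field_simp
      have hkey : (G.degree b : ℝ) + s ≤ r * (G.degree b : ℝ) := by
        have h5 := hδle b
        nlinarith
      have hSS : h S = 1 - ∏ u ∈ S, lam u := rfl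
      rw [hins, hera, hSS]
      exact per_edge (hdegR a) (hdegR b) hs hP hkey
    set g : Finset V → ℝ := fun S => f S - h S with hg
    obtain ⟨T₁, _, hT₁⟩ := Finset.exists_min_image (Finset.univ : Finset (Finset V)) g
      ⟨∅, Finset.mem_univ ∅⟩
    set m := g T₁ with hm
    have hgm : ∀ S : Finset V, m ≤ g S := fun S => hT₁ S (Finset.mem_univ S)
    set A : Finset (Finset V) := Finset.univ.filter (fun S => g S = m) with hA
    obtain ⟨T₀, hT₀A, hT₀min⟩ := Finset.exists_min_image A (fun S => S.card)
      ⟨T₁, by simp [hA]; rfl⟩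
    have hgT₀ : g T₀ = m := (Finset.mem_filter.1 hT₀A).2
    have hm0 : 0 ≤ m := by
      by_cases hTe : T₀ = ∅
      · rw [← hgT₀, hTe]
        simp [hg, hh, hf0]
      by_cases hTu : T₀ = Finset.univ
      · rw [← hgT₀, hTu]
        have h6 : 0 < ∏ u ∈ (Finset.univ : Finset V), lam u := hProdpos _
        simp only [hg, hh, hf1]
        linarith
      · exfalso
        have hEq := hfeq T₀ hTe hTu
        set W := ∑ a ∈ T₀, ∑ b ∈ T₀ᶜ,
          (if G.Adj a b then r / (G.degree a : ℝ) + 1 / (G.degree b : ℝ) else 0) with hW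
        have hsum0 : ∑ a ∈ T₀, ∑ b ∈ T₀ᶜ, (if G.Adj a b then
            r/(G.degree a:ℝ) * (g (insert b T₀) - m)
            + 1/(G.degree b:ℝ) * (g (T₀.erase a) - m) else 0) ≤ 0 := by
          have hrw : ∑ a ∈ T₀, ∑ b ∈ T₀ᶜ, (if G.Adj a b then
              r/(G.degree a:ℝ) * (g (insert b T₀) - m)
              + 1/(G.degree b:ℝ) * (g (T₀.erase a) - m) else 0)
            = (∑ a ∈ T₀, ∑ b ∈ T₀ᶜ, (if G.Adj a b then
                r/(G.degree a:ℝ) * f (insert b T₀)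
                + 1/(G.degree b:ℝ) * f (T₀.erase a) else 0))
              - (∑ a ∈ T₀, ∑ b ∈ T₀ᶜ, (if G.Adj a b then
                r/(G.degree a:ℝ) * h (insert b T₀)
                + 1/(G.degree b:ℝ) * h (T₀.erase a) else 0))
              - m * W := by
            rw [hW, Finset.mul_sum, ← Finset.sum_sub_distrib, ← Finset.sum_sub_distrib]
            refine Finset.sum_congr rfl fun a ha => ?_
            rw [Finset.mul_sum, ← Finset.sum_sub_distrib, ← Finset.sum_sub_distrib]
            refine Finset.sum_congr rfl fun b hb => ?_
            split_ifs with hab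
            · simp only [hg]; ring
            · ring
          rw [hrw, ← hEq]
          have hhsum : h T₀ * W ≤ ∑ a ∈ T₀, ∑ b ∈ T₀ᶜ, (if G.Adj a b then
              r/(G.degree a:ℝ) * h (insert b T₀)
              + 1/(G.degree b:ℝ) * h (T₀.erase a) else 0) := by
            rw [hW, Finset.mul_sum]
            refine Finset.sum_le_sum fun a ha => ?_
            rw [Finset.mul_sum]
            refine Finset.sum_le_sum fun b hb => ?_
            split_ifs with hab
            · rw [mul_comm]
              exact hedge T₀ a ha b hb hab
            · simp
          have hfhm : f T₀ - h T₀ - m = 0 := by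
            have h8 : g T₀ = f T₀ - h T₀ := rfl
            rw [h8] at hgT₀; linarith
          have hfac : f T₀ * W - h T₀ * W - m * W = (f T₀ - h T₀ - m) * W := by ring
          have h9 : f T₀ * W - h T₀ * W - m * W = 0 := by rw [hfac, hfhm]; ring
          have h10 := sub_le_sub_right (sub_le_sub_left hhsum (f T₀ * W)) (m * W)
          exact h10.trans h9.le
        have hnn : ∀ a ∈ T₀, ∀ b ∈ T₀ᶜ, (0:ℝ) ≤ (if G.Adj a b then
            r/(G.degree a:ℝ) * (g (insert b T₀) - m)
            + 1/(G.degree b:ℝ) * (g (T₀.erase a) - m) else 0) := by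
          intro a ha b hb
          split_ifs with hab
          · have h1 : 0 ≤ g (insert b T₀) - m := by linarith [hgm (insert b T₀)]
            have h2 : 0 ≤ g (T₀.erase a) - m := by linarith [hgm (T₀.erase a)]
            have h3 : (0:ℝ) ≤ r / (G.degree a:ℝ) := div_nonneg (by linarith) (hdegR a).le
            have h4 : (0:ℝ) ≤ 1 / (G.degree b:ℝ) := by
              have := hdegR b; positivity
            exact add_nonneg (mul_nonneg h3 h1) (mul_nonneg h4 h2)
          · exact le_refl 0
        have hzero : ∑ a ∈ T₀, ∑ b ∈ T₀ᶜ, (if G.Adj a b then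
            r/(G.degree a:ℝ) * (g (insert b T₀) - m)
            + 1/(G.degree b:ℝ) * (g (T₀.erase a) - m) else 0) = 0 :=
          le_antisymm hsum0 (Finset.sum_nonneg fun a ha =>
            Finset.sum_nonneg fun b hb => hnn a ha b hb)
        obtain ⟨a, haT, b, hbT, hab⟩ := exists_boundary_edge hconn hTe hTu
        have hinner : ∑ b ∈ T₀ᶜ, (if G.Adj a b then
            r/(G.degree a:ℝ) * (g (insert b T₀) - m)
            + 1/(G.degree b:ℝ) * (g (T₀.erase a) - m) else 0) = 0 :=
          (Finset.sum_eq_zero_iff_of_nonneg (fun x hx =>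
            Finset.sum_nonneg fun y hy => hnn x hx y hy)).1 hzero a haT
        have hterm : (if G.Adj a b then
            r/(G.degree a:ℝ) * (g (insert b T₀) - m)
            + 1/(G.degree b:ℝ) * (g (T₀.erase a) - m) else 0) = 0 :=
          (Finset.sum_eq_zero_iff_of_nonneg (fun y hy => hnn a haT y hy)).1 hinner b hbT
        rw [if_pos hab] at hterm
        have h1 : 0 ≤ g (insert b T₀) - m := by linarith [hgm (insert b T₀)]
        have h2 : 0 ≤ g (T₀.erase a) - m := by linarith [hgm (T₀.erase a)]
        have h3 : (0:ℝ) ≤ r / (G.degree a:ℝ) := div_nonneg (by linarith) (hdegR a).le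
        have h4 : (0:ℝ) < 1 / (G.degree b:ℝ) := by
          have := hdegR b; positivity
        have h9 : 1/(G.degree b:ℝ) * (g (T₀.erase a) - m) = 0 := by
          have hA1 : 0 ≤ r/(G.degree a:ℝ) * (g (insert b T₀) - m) := mul_nonneg h3 h1
          have hA2 : 0 ≤ 1/(G.degree b:ℝ) * (g (T₀.erase a) - m) := mul_nonneg h4.le h2
          linarith
        have h5 : g (T₀.erase a) = m := by
          rcases mul_eq_zero.1 h9 with h10 | h10
          · exact absurd h10 (ne_of_gt h4)
          · linarith
        have hermem : T₀.erase a ∈ A := by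
          rw [hA]; exact Finset.mem_filter.2 ⟨Finset.mem_univ _, h5⟩
        have h6 := hT₀min _ hermem
        have h7 : (T₀.erase a).card < T₀.card := Finset.card_erase_lt_of_mem haT
        omega
    -- conclude
    have hfv : h {v} ≤ f {v} := by
      have := hgm {v}
      have h8 : g {v} = f {v} - h {v} := rfl
      rw [h8] at this; linarith
    have hhv : h {v} = 1 - lam v := by
      simp only [hh]; rw [Finset.prod_singleton]
    have hlv : lam v = (G.degree v : ℝ) / ((G.degree v : ℝ) + s) := rfl
    have hfin : (r - 1) / (r + (G.degree v : ℝ) / δ) ≤ h {v} := by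
      rw [hhv, hlv]
      have hd := hdegR v
      have hδv := hδle v
      have hdd : δ * ((G.degree v : ℝ) / δ) = (G.degree v : ℝ) :=
        mul_div_cancel₀ _ (ne_of_gt hδ)
      have hpos1 : (0:ℝ) < r + (G.degree v : ℝ) / δ := by
        have : (0:ℝ) ≤ (G.degree v : ℝ) / δ := by positivity
        linarith
      have hpos2 : (0:ℝ) < (G.degree v : ℝ) + s := by linarith
      have hlv2 : 1 - (G.degree v : ℝ) / ((G.degree v : ℝ) + s)
          = s / ((G.degree v : ℝ) + s) := by
        field_simp
        ring
      rw [hlv2, div_le_div_iff₀ hpos1 hpos2]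
      rw [hsdef]
      nlinarith [hdd, hδ, hd]
    exact le_trans hfin hfv
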